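/- arXiv:2106.14668 — 6 statements merged into one kernel-verified Lean document; each statement's English description precedes it below -/
import Mathlib

section
/- Let A ∈ ℝ^{2×2}, let c < 0, and set B := cA (so b_{ij} = c·a_{ij}). Suppose (p,q) ∈ (0,1)² is an interior Nash equilibrium, i.e., ΔA(q) = 0 and ΔB(p) = 0. Let x, y : ℝ → (0,1) be a replicator dynamics trajectory for the game (A,B). Then the weighted sum of KL divergences t ↦ (−c)·D(p‖x(t)) + D(q‖y(t)) is constant in t (it is an invariant of the motion, with positive weight −c > 0 on the first term). -/
/-- KL divergence between Bernoulli(p) and Bernoulli(x). -/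
noncomputable def klBern (p x : ℝ) : ℝ :=
  p * Real.log (p / x) + (1 - p) * Real.log ((1 - p) / (1 - x))

/-- Row player's payoff difference against column strategy (y, 1-y). -/
def payoffDiffRow (A : Matrix (Fin 2) (Fin 2) ℝ) (y : ℝ) : ℝ :=
  (A 0 0 - A 1 0) * y + (A 0 1 - A 1 1) * (1 - y)

/-- Column player's payoff difference against row strategy (x, 1-x). -/
def payoffDiffCol (B : Matrix (Fin 2) (Fin 2) ℝ) (x : ℝ) : ℝ :=
  (B 0 0 - B 0 1) * x + (B 1 0 - B 1 1) * (1 - x)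

/-- Derivative of `t ↦ klBern p (x t)` along a replicator-type trajectory. -/
lemma klBern_hasDerivAt (p : ℝ) (hp : p ∈ Set.Ioo (0:ℝ) 1)
    (x : ℝ → ℝ) (hx : ∀ t, x t ∈ Set.Ioo (0:ℝ) 1)
    (d : ℝ → ℝ) (hx' : ∀ t, HasDerivAt x (x t * (1 - x t) * d t) t) (t : ℝ) :
    HasDerivAt (fun t => klBern p (x t)) ((x t - p) * d t) t := by
  have hx0 : x t ≠ 0 := (hx t).1.ne'
  have hx1 : (1 : ℝ) - x t ≠ 0 := by have := (hx t).2; linarith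
  have hfun : (fun t => klBern p (x t))
      = fun t => p * Real.log p - p * Real.log (x t)
          + ((1 - p) * Real.log (1 - p) - (1 - p) * Real.log (1 - x t)) := by
    funext s
    have h0 : x s ≠ 0 := (hx s).1.ne'
    have h1 : (1 : ℝ) - x s ≠ 0 := by have := (hx s).2; linarith
    rw [klBern, Real.log_div hp.1.ne' h0,
      Real.log_div (by have := hp.2; linarith : (1:ℝ) - p ≠ 0) h1]
    ring
  rw [hfun]
  have h1 : HasDerivAt (fun t => Real.log (x t))
      ((x t * (1 - x t) * d t) / x t) t := (hx' t).log hx0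
  have h2 : HasDerivAt (fun t => Real.log (1 - x t))
      ((0 - x t * (1 - x t) * d t) / (1 - x t)) t :=
    ((hasDerivAt_const t (1:ℝ)).sub (hx' t)).log hx1
  have := ((hasDerivAt_const t (p * Real.log p)).sub (h1.const_mul p)).add
    ((hasDerivAt_const t ((1 - p) * Real.log (1 - p))).sub (h2.const_mul (1 - p)))
  refine this.congr_deriv ?_
  symm
  field_simp
  ring

/-- In a 2×2 rescaled zero-sum game `(A, cA)` with `c < 0` and interior Nash
equilibrium `(p, q)`, the weighted sum of KL divergences
`(-c)·D(p‖x(t)) + D(q‖y(t))` is invariant along replicator trajectories. -/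
theorem rescaledZeroSum_KL_invariant
    (A : Matrix (Fin 2) (Fin 2) ℝ) (c : ℝ) (hc : c < 0)
    (B : Matrix (Fin 2) (Fin 2) ℝ) (hB : ∀ i j, B i j = c * A i j)
    (p q : ℝ) (hp : p ∈ Set.Ioo (0:ℝ) 1) (hq : q ∈ Set.Ioo (0:ℝ) 1)
    (hNashA : payoffDiffRow A q = 0) (hNashB : payoffDiffCol B p = 0)
    (x y : ℝ → ℝ)
    (hx : ∀ t, x t ∈ Set.Ioo (0:ℝ) 1) (hy : ∀ t, y t ∈ Set.Ioo (0:ℝ) 1)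
    (hx' : ∀ t, HasDerivAt x (x t * (1 - x t) * payoffDiffRow A (y t)) t)
    (hy' : ∀ t, HasDerivAt y (y t * (1 - y t) * payoffDiffCol B (x t)) t) :
    ∀ s t : ℝ,
      (-c) * klBern p (x s) + klBern q (y s)
        = (-c) * klBern p (x t) + klBern q (y t) := by
  have hV : ∀ t, HasDerivAt
      (fun t => (-c) * klBern p (x t) + klBern q (y t)) 0 t := by
    intro t
    have h1 := (klBern_hasDerivAt p hp x hx _ hx' t).const_mul (-c)
    have h2 := klBern_hasDerivAt q hq y hy _ hy' t
    have h := h1.add h2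
    refine h.congr_deriv ?_
    symm
    have hA := hNashA
    have hBp := hNashB
    simp only [payoffDiffRow, payoffDiffCol, hB] at hA hBp ⊢
    linear_combination (c * (x t - p)) * hA - (y t - q) * hBp
  have hconst : ∀ s t : ℝ,
      (fun t => (-c) * klBern p (x t) + klBern q (y t)) s
        = (fun t => (-c) * klBern p (x t) + klBern q (y t)) t := by
    intro s t
    exact is_const_of_deriv_eq_zero
      (fun u => (hV u).differentiableAt) (fun u => (hV u).deriv) s t
  exact hconst
end

section
/- Let A ∈ ℝ^{2×2}, let c > 0, and set B := cA (so b_{ij} = c·a_{ij}). Suppose (p,q) ∈ (0,1)² is an interior Nash equilibrium, i.e., ΔA(q) = 0 and ΔB(p) = 0. Let x, y : ℝ → (0,1) be a replicator dynamics trajectory for the game (A,B). Then the weighted difference of KL divergences t ↦ c·D(p‖x(t)) − D(q‖y(t)) is constant in t (it is an invariant of the motion). -/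
lemma klBern_comp_hasDerivAt (p : ℝ) (hp : p ∈ Set.Ioo (0:ℝ) 1)
    (x : ℝ → ℝ) (hx : ∀ t, x t ∈ Set.Ioo (0:ℝ) 1)
    (x' t : ℝ) (hd : HasDerivAt x x' t) :
    HasDerivAt (fun s => klBern p (x s))
      (x' * ((1 - p) / (1 - x t) - p / x t)) t := by
  have hx0 : x t ≠ 0 := ne_of_gt (hx t).1
  have hx1 : (1 : ℝ) - x t ≠ 0 := by have := (hx t).2; intro h; linarith [(hx t).2]
  have hfun : (fun s => klBern p (x s))
      = fun s => (p * Real.log p - p * Real.log (x s))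
        + ((1 - p) * Real.log (1 - p) - (1 - p) * Real.log (1 - x s)) := by
    funext s
    have h0 : x s ≠ 0 := ne_of_gt (hx s).1
    have h1 : (1:ℝ) - x s ≠ 0 := by intro h; linarith [(hx s).2]
    have hp0 : p ≠ 0 := ne_of_gt hp.1
    have hp1 : (1:ℝ) - p ≠ 0 := by intro h; linarith [hp.2]
    simp only [klBern, Real.log_div hp0 h0, Real.log_div hp1 h1]
    ring
  rw [hfun]
  have h1 : HasDerivAt (fun s => Real.log (x s)) (x' / x t) t := hd.log hx0
  have h2 : HasDerivAt (fun s => Real.log (1 - x s)) (-x' / (1 - x t)) t := by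
    have h3 : HasDerivAt (fun s => 1 - x s) (-x') t := by
      exact hd.const_sub 1
    exact h3.log hx1
  have h4 := ((hasDerivAt_const t (p * Real.log p)).sub (h1.const_mul p)).add
    ((hasDerivAt_const t ((1 - p) * Real.log (1 - p))).sub (h2.const_mul (1 - p)))
  refine h4.congr_deriv (Eq.symm ?_)
  field_simp
  ring

/-- In a 2×2 rescaled coordination game `(A, cA)` with `c > 0` and interior
Nash equilibrium `(p, q)`, the weighted difference of KL divergences
`c·D(p‖x(t)) − D(q‖y(t))` is invariant along replicator trajectories. -/
theorem rescaledCoordination_KL_invariant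
    (A : Matrix (Fin 2) (Fin 2) ℝ) (c : ℝ) (hc : 0 < c)
    (B : Matrix (Fin 2) (Fin 2) ℝ) (hB : ∀ i j, B i j = c * A i j)
    (p q : ℝ) (hp : p ∈ Set.Ioo (0:ℝ) 1) (hq : q ∈ Set.Ioo (0:ℝ) 1)
    (hNashA : payoffDiffRow A q = 0) (hNashB : payoffDiffCol B p = 0)
    (x y : ℝ → ℝ)
    (hx : ∀ t, x t ∈ Set.Ioo (0:ℝ) 1) (hy : ∀ t, y t ∈ Set.Ioo (0:ℝ) 1)
    (hx' : ∀ t, HasDerivAt x (x t * (1 - x t) * payoffDiffRow A (y t)) t)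
    (hy' : ∀ t, HasDerivAt y (y t * (1 - y t) * payoffDiffCol B (x t)) t) :
    ∀ s t : ℝ,
      c * klBern p (x s) - klBern q (y s)
        = c * klBern p (x t) - klBern q (y t) := by
  set f : ℝ → ℝ := fun t => c * klBern p (x t) - klBern q (y t) with hf
  have key : ∀ t, HasDerivAt f 0 t := by
    intro t
    have hdx := klBern_comp_hasDerivAt p hp x hx _ t (hx' t)
    have hdy := klBern_comp_hasDerivAt q hq y hy _ t (hy' t)
    have h := (hdx.const_mul c).sub hdy
    refine h.congr_deriv (Eq.symm ?_)
    have hx0 : x t ≠ 0 := ne_of_gt (hx t).1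
    have hx1 : (1 : ℝ) - x t ≠ 0 := by intro h'; linarith [(hx t).2]
    have hy0 : y t ≠ 0 := ne_of_gt (hy t).1
    have hy1 : (1 : ℝ) - y t ≠ 0 := by intro h'; linarith [(hy t).2]
    have e1 : x t * (1 - x t) * payoffDiffRow A (y t) * ((1 - p) / (1 - x t) - p / x t)
        = payoffDiffRow A (y t) * (x t - p) := by
      field_simp; ring
    have e2 : y t * (1 - y t) * payoffDiffCol B (x t) * ((1 - q) / (1 - y t) - q / y t)
        = payoffDiffCol B (x t) * (y t - q) := by
      field_simp; ring
    rw [e1, e2]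
    simp only [payoffDiffRow, payoffDiffCol, hB] at hNashA hNashB ⊢
    linear_combination (-c * (x t - p)) * hNashA + (y t - q) * hNashB
  have hdiff : Differentiable ℝ f := fun t => (key t).differentiableAt
  have hderiv : ∀ t, deriv f t = 0 := fun t => (key t).deriv
  intro s t
  exact is_const_of_deriv_eq_zero hdiff hderiv s t
end

section
/- Let A ∈ ℝ^{2×2} with S := a₁₁ − a₁₂ − a₂₁ + a₂₂ ≠ 0, let c ≠ 0, and set B := cA. Suppose (p,q) ∈ (0,1)² is an interior Nash equilibrium, i.e., ΔA(q) = 0 and ΔB(p) = 0. Let x, y : ℝ → (0,1) be a replicator dynamics trajectory for (A,B), and suppose the trajectory is T-periodic for some T > 0, i.e., x(t+T) = x(t) and y(t+T) = y(t) for all t. Then the time averages over one period equal the Nash equilibrium: (1/T)·∫₀ᵀ x(t) dt = p and (1/T)·∫₀ᵀ y(t) dt = q. -/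
/-- For a generic 2×2 rescaled game `(A, cA)` with interior Nash equilibrium
`(p, q)`, the time averages of a periodic replicator trajectory over one
period equal the Nash equilibrium. -/
theorem periodic_time_average_eq_nash
    (A : Matrix (Fin 2) (Fin 2) ℝ)
    (hS : A 0 0 - A 0 1 - A 1 0 + A 1 1 ≠ 0)
    (c : ℝ) (hc : c ≠ 0)
    (B : Matrix (Fin 2) (Fin 2) ℝ) (hB : ∀ i j, B i j = c * A i j)
    (p q : ℝ) (hp : p ∈ Set.Ioo (0:ℝ) 1) (hq : q ∈ Set.Ioo (0:ℝ) 1)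
    (hNashA : payoffDiffRow A q = 0) (hNashB : payoffDiffCol B p = 0)
    (x y : ℝ → ℝ)
    (hx : ∀ t, x t ∈ Set.Ioo (0:ℝ) 1) (hy : ∀ t, y t ∈ Set.Ioo (0:ℝ) 1)
    (hx' : ∀ t, HasDerivAt x (x t * (1 - x t) * payoffDiffRow A (y t)) t)
    (hy' : ∀ t, HasDerivAt y (y t * (1 - y t) * payoffDiffCol B (x t)) t)
    (T : ℝ) (hT : 0 < T)
    (hxper : ∀ t, x (t + T) = x t) (hyper : ∀ t, y (t + T) = y t) :
    (1 / T) * ∫ t in (0:ℝ)..T, x t = p ∧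
    (1 / T) * ∫ t in (0:ℝ)..T, y t = q := by
  have hxcont : Continuous x := by
    rw [continuous_iff_continuousAt]; exact fun t => (hx' t).continuousAt
  have hycont : Continuous y := by
    rw [continuous_iff_continuousAt]; exact fun t => (hy' t).continuousAt
  set S : ℝ := A 0 0 - A 0 1 - A 1 0 + A 1 1 with hSdef
  -- linear forms of the payoff differences
  have hformA : ∀ z : ℝ, payoffDiffRow A z = S * (z - q) := by
    intro z
    have h : payoffDiffRow A z = payoffDiffRow A q + S * (z - q) := by
      unfold payoffDiffRow; ring
    rw [h, hNashA, zero_add]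
  have hformB : ∀ z : ℝ, payoffDiffCol B z = (c * S) * (z - p) := by
    intro z
    have h : payoffDiffCol B z
        = payoffDiffCol B p + (B 0 0 - B 0 1 - B 1 0 + B 1 1) * (z - p) := by
      unfold payoffDiffCol; ring
    rw [h, hNashB, zero_add, hB, hB, hB, hB]
    ring
  -- derivative of the log-ratio for x
  have hFx : ∀ t, HasDerivAt (fun t => Real.log (x t) - Real.log (1 - x t))
      (payoffDiffRow A (y t)) t := by
    intro t
    have h1 : x t ≠ 0 := ne_of_gt (hx t).1
    have h1' : (1 : ℝ) - x t ≠ 0 := by have := (hx t).2; intro h; linarith [sub_eq_zero.mp h]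
    have d1 := (hx' t).log h1
    have d2 := ((hasDerivAt_const t (1:ℝ)).sub (hx' t)).log h1'
    have := d1.sub d2
    convert this using 1
    · rfl
    · rfl
    · rfl
    · simp only [Pi.sub_apply]
      field_simp
      ring
  have hFy : ∀ t, HasDerivAt (fun t => Real.log (y t) - Real.log (1 - y t))
      (payoffDiffCol B (x t)) t := by
    intro t
    have h1 : y t ≠ 0 := ne_of_gt (hy t).1
    have h1' : (1 : ℝ) - y t ≠ 0 := by have := (hy t).2; intro h; linarith [sub_eq_zero.mp h]
    have d1 := (hy' t).log h1
    have d2 := ((hasDerivAt_const t (1:ℝ)).sub (hy' t)).log h1'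
    have := d1.sub d2
    convert this using 1
    · rfl
    · rfl
    · rfl
    · simp only [Pi.sub_apply]
      field_simp
      ring
  -- integrals of payoff differences over a period vanish
  have hcontA : Continuous fun t => payoffDiffRow A (y t) := by
    simp only [hformA]; exact continuous_const.mul (hycont.sub continuous_const)
  have hcontB : Continuous fun t => payoffDiffCol B (x t) := by
    simp only [hformB]; exact continuous_const.mul (hxcont.sub continuous_const)
  have hxT : x T = x 0 := by have := hxper 0; simpa using this
  have hyT : y T = y 0 := by have := hyper 0; simpa using this
  have hIA : ∫ t in (0:ℝ)..T, payoffDiffRow A (y t) = 0 := by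
    rw [intervalIntegral.integral_eq_sub_of_hasDerivAt (fun t _ => hFx t)
      (hcontA.intervalIntegrable 0 T)]
    rw [hxT]; ring
  have hIB : ∫ t in (0:ℝ)..T, payoffDiffCol B (x t) = 0 := by
    rw [intervalIntegral.integral_eq_sub_of_hasDerivAt (fun t _ => hFy t)
      (hcontB.intervalIntegrable 0 T)]
    rw [hyT]; ring
  -- convert to statements about ∫ x and ∫ y
  have hIy : ∫ t in (0:ℝ)..T, y t = T * q := by
    have h1 : ∫ t in (0:ℝ)..T, payoffDiffRow A (y t)
        = S * ((∫ t in (0:ℝ)..T, y t) - T * q) := by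
      simp only [hformA]
      rw [intervalIntegral.integral_const_mul,
        intervalIntegral.integral_sub (hycont.intervalIntegrable 0 T)
          (intervalIntegrable_const)]
      simp [smul_eq_mul]
    rw [hIA] at h1
    have := (mul_eq_zero.mp h1.symm).resolve_left hS
    linarith [sub_eq_zero.mp this]
  have hIx : ∫ t in (0:ℝ)..T, x t = T * p := by
    have h1 : ∫ t in (0:ℝ)..T, payoffDiffCol B (x t)
        = (c * S) * ((∫ t in (0:ℝ)..T, x t) - T * p) := by
      simp only [hformB]
      rw [intervalIntegral.integral_const_mul,
        intervalIntegral.integral_sub (hxcont.intervalIntegrable 0 T)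
          (intervalIntegrable_const)]
      simp [smul_eq_mul]
    rw [hIB] at h1
    have hcS : c * S ≠ 0 := mul_ne_zero hc hS
    have := (mul_eq_zero.mp h1.symm).resolve_left hcS
    linarith [sub_eq_zero.mp this]
  constructor
  · rw [hIx]; field_simp
  · rw [hIy]; field_simp
end

section
/- Let T > 0, let x : ℝ → ℝ be continuously differentiable and T-periodic, let y : ℝ → ℝ be continuous and T-periodic, and let σ ∈ ℝ. Suppose there are exactly two times t₁ ≠ t₂ in [0,T) with x(t) = σ, i.e., {t ∈ [0,T) : x(t) = σ} = {t₁, t₂}, and that the crossings are transversal: v₁ := x′(t₁) ≠ 0 and v₂ := x′(t₂) ≠ 0. Set ν₁ := y(t₁), ν₂ := y(t₂). Then as ε → 0⁺, the ratio (∫₀ᵀ y(t)·1[|x(t) − σ| ≤ ε] dt) / (∫₀ᵀ 1[|x(t) − σ| ≤ ε] dt) converges to (ν₁/|v₁| + ν₂/|v₂|) / (1/|v₁| + 1/|v₂|). -/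
open Set MeasureTheory Filter Topology
set_option maxHeartbeats 1000000

lemma sandwich {x : ℝ → ℝ} (hx : ContDiff ℝ 1 x) {t₀ σ : ℝ} (h0 : x t₀ = σ)
    {c C : ℝ} (hc : c < |deriv x t₀|) (hC : |deriv x t₀| < C) :
    ∃ δ > 0, ∀ t, |t - t₀| ≤ δ →
      c * |t - t₀| ≤ |x t - σ| ∧ |x t - σ| ≤ C * |t - t₀| := by
  have hder : Continuous (deriv x) := hx.continuous_deriv le_rfl
  have habs : ContinuousAt (fun t => |deriv x t|) t₀ := (hder.abs).continuousAt
  have hev : ∀ᶠ t in 𝓝 t₀, |deriv x t| ∈ Ioo c C :=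
    habs (Ioo_mem_nhds hc hC)
  rcases Metric.eventually_nhds_iff.1 hev with ⟨δ', hδ', hball⟩
  refine ⟨δ'/2, by positivity, fun t ht => ?_⟩
  have hbound : ∀ s, |s - t₀| ≤ δ'/2 → c ≤ |deriv x s| ∧ |deriv x s| ≤ C := by
    intro s hs
    have : dist s t₀ < δ' := by
      rw [Real.dist_eq]; linarith
    exact ⟨(hball this).1.le, (hball this).2.le⟩
  have hdiff : ∀ s, HasDerivAt x (deriv x s) s :=
    fun s => ((hx.differentiable one_ne_zero) s).hasDerivAt
  have htle := abs_le.1 ht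
  rcases lt_trichotomy t t₀ with h | h | h
  · obtain ⟨ξ, hξ, hslope⟩ := exists_hasDerivAt_eq_slope x (deriv x) h
      (hx.continuous.continuousOn) (fun s _ => hdiff s)
    have hξb : |ξ - t₀| ≤ δ'/2 := by
      rw [abs_of_nonpos (by linarith [hξ.2] : ξ - t₀ ≤ 0)]
      linarith [hξ.1]
    have heq : |x t - σ| = |deriv x ξ| * |t - t₀| := by
      rw [h0] at hslope
      have hne : t₀ - t ≠ 0 := by intro hh; linarith
      have : deriv x ξ * (t₀ - t) = σ - x t := by
        field_simp at hslope; linarith [hslope]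
      calc |x t - σ| = |σ - x t| := (abs_sub_comm _ _)
        _ = |deriv x ξ * (t₀ - t)| := by rw [this]
        _ = |deriv x ξ| * |t₀ - t| := abs_mul _ _
        _ = |deriv x ξ| * |t - t₀| := by rw [abs_sub_comm]
    rw [heq]
    exact ⟨mul_le_mul_of_nonneg_right (hbound ξ hξb).1 (abs_nonneg _),
      mul_le_mul_of_nonneg_right (hbound ξ hξb).2 (abs_nonneg _)⟩
  · subst h; simp [h0]
  · obtain ⟨ξ, hξ, hslope⟩ := exists_hasDerivAt_eq_slope x (deriv x) h
      (hx.continuous.continuousOn) (fun s _ => hdiff s)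
    have hξb : |ξ - t₀| ≤ δ'/2 := by
      rw [abs_of_nonneg (by linarith [hξ.1] : (0:ℝ) ≤ ξ - t₀)]
      linarith [hξ.2]
    have heq : |x t - σ| = |deriv x ξ| * |t - t₀| := by
      rw [h0] at hslope
      have hne : t - t₀ ≠ 0 := by intro hh; linarith
      have : deriv x ξ * (t - t₀) = x t - σ := by
        field_simp at hslope; linarith [hslope]
      calc |x t - σ| = |deriv x ξ * (t - t₀)| := by rw [this]
        _ = |deriv x ξ| * |t - t₀| := abs_mul _ _
    rw [heq]
    exact ⟨mul_le_mul_of_nonneg_right (hbound ξ hξb).1 (abs_nonneg _),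
      mul_le_mul_of_nonneg_right (hbound ξ hξb).2 (abs_nonneg _)⟩

lemma crossing_tendsto {x f : ℝ → ℝ} (hx : ContDiff ℝ 1 x) (hf : Continuous f)
    {σ t₀ δ : ℝ} (hδ : 0 < δ) (h0 : x t₀ = σ) (hv : deriv x t₀ ≠ 0)
    (hloc : ∀ t, |t - t₀| ≤ δ → (|deriv x t₀|/2) * |t - t₀| ≤ |x t - σ|) :
    Filter.Tendsto
      (fun ε : ℝ => (∫ t in {s : ℝ | |x s - σ| ≤ ε} ∩ Ioc (t₀-δ) (t₀+δ), f t) / (2*ε))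
      (nhdsWithin 0 (Set.Ioi 0)) (nhds (f t₀ / |deriv x t₀|)) := by
  set V := |deriv x t₀| with hVdef
  have hV : 0 < V := abs_pos.2 hv
  have hM : (0:ℝ) ≤ |f t₀| := abs_nonneg _
  set M := |f t₀| with hMdef
  rw [Metric.tendsto_nhdsWithin_nhds]
  intro ζ hζ
  set θ := min (V/4) (ζ*V^2/(16*(M+1))) with hθdef
  have hθpos : 0 < θ := by
    apply lt_min (by positivity); positivity
  have hθ1 : θ ≤ V/4 := min_le_left _ _
  have hθ2 : θ ≤ ζ*V^2/(16*(M+1)) := min_le_right _ _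
  set c := V - θ with hcdef
  set C := V + θ with hCdef
  have hc0 : 0 < c := by simp only [hcdef]; linarith
  have hcV : c < V := by simp only [hcdef]; linarith
  have hVC : V < C := by simp only [hCdef]; linarith
  have hcV2 : V/2 ≤ c := by simp only [hcdef]; linarith
  obtain ⟨δ₁, hδ₁pos, hs⟩ := sandwich hx h0 hcV hVC
  set δ'' := min δ₁ δ with hδ''def
  have hδ''pos : 0 < δ'' := lt_min hδ₁pos hδ
  -- continuity of f at t₀
  obtain ⟨d, hdpos, hd⟩ := Metric.continuousAt_iff.1 hf.continuousAt (ζ*V/8) (by positivity)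
  set ρ := d/2 with hρdef
  have hρpos : 0 < ρ := by positivity
  have hρ : ∀ t, |t - t₀| ≤ ρ → |f t - f t₀| ≤ ζ*V/8 := by
    intro t htt
    have : dist t t₀ < d := by rw [Real.dist_eq]; simp only [hρdef] at htt; linarith
    exact (hd this).le
  refine ⟨min (δ''*V/2) (c*ρ), lt_min (by positivity) (by positivity), fun {ε} hεpos hεd => ?_⟩
  have hε : 0 < ε := hεpos
  rw [Real.dist_eq, sub_zero, abs_of_pos hε] at hεd
  have hε1 : ε ≤ δ''*V/2 := (lt_min_iff.1 hεd).1.le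
  have hε2 : ε ≤ c*ρ := (lt_min_iff.1 hεd).2.le
  set S := {s : ℝ | |x s - σ| ≤ ε} with hSdef
  set E := S ∩ Ioc (t₀-δ) (t₀+δ) with hEdef
  -- Step 1 : E ⊆ Icc (t₀ - ε/c) (t₀ + ε/c)
  have step1 : E ⊆ Icc (t₀ - ε/c) (t₀ + ε/c) := by
    rintro t ⟨htS, htI⟩
    have habs : |t - t₀| ≤ δ := by
      rw [abs_le]; exact ⟨by linarith [htI.1], by linarith [htI.2]⟩
    have h1 : (V/2) * |t - t₀| ≤ ε := le_trans (hloc t habs) htS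
    have h2 : |t - t₀| ≤ δ'' := by
      nlinarith [abs_nonneg (t - t₀)]
    have h3 : c * |t - t₀| ≤ ε :=
      le_trans (hs t (le_trans h2 (min_le_left _ _))).1 htS
    have h4 : |t - t₀| ≤ ε/c := by
      rw [le_div_iff₀ hc0]; linarith [h3]
    have := abs_le.1 h4
    exact ⟨by linarith [this.1], by linarith [this.2]⟩
  -- Step 2 : Ioc (t₀ - ε/C) (t₀ + ε/C) ⊆ E
  have hεC : ε/C ≤ δ'' := by
    rw [div_le_iff₀ (by linarith : (0:ℝ) < C)]
    nlinarith
  have step2 : Ioc (t₀ - ε/C) (t₀ + ε/C) ⊆ E := by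
    rintro t ⟨ht1, ht2⟩
    have habs : |t - t₀| ≤ ε/C := by
      rw [abs_le]; exact ⟨by linarith, by linarith⟩
    have h2 : |t - t₀| ≤ δ₁ := le_trans habs (le_trans hεC (min_le_left _ _))
    have hxb : |x t - σ| ≤ ε := by
      have h5 := (hs t h2).2
      have hC0 : (0:ℝ) < C := by linarith
      have h6 : C * |t - t₀| ≤ C * (ε/C) := mul_le_mul_of_nonneg_left habs hC0.le
      have h7 : C * (ε/C) = ε := mul_div_cancel₀ _ hC0.ne'
      exact le_trans h5 (le_trans h6 h7.le)
    have hδ''δ : δ'' ≤ δ := min_le_right _ _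
    refine ⟨hxb, ⟨by linarith [le_trans habs hεC, (abs_le.1 habs).1], ?_⟩⟩
    have := (abs_le.1 habs).2
    linarith [le_trans hεC hδ''δ]
  -- measurability
  have hSm : MeasurableSet S :=
    (isClosed_le ((hx.continuous.sub continuous_const).abs) continuous_const).measurableSet
  have hEm : MeasurableSet E := hSm.inter measurableSet_Ioc
  -- measure bounds
  have hup : volume E ≤ ENNReal.ofReal (2*(ε/c)) := by
    calc volume E ≤ volume (Icc (t₀ - ε/c) (t₀ + ε/c)) := measure_mono step1
      _ = ENNReal.ofReal (2*(ε/c)) := by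
          rw [Real.volume_Icc]; congr 1; ring
  have hfin : volume E < ⊤ := lt_of_le_of_lt hup ENNReal.ofReal_lt_top
  set m := (volume E).toReal with hmdef
  have hm0 : 0 ≤ m := ENNReal.toReal_nonneg
  have hm1 : m ≤ 2*(ε/c) := ENNReal.toReal_le_of_le_ofReal (by positivity) hup
  have hm2 : 2*(ε/C) ≤ m := by
    have hlow : ENNReal.ofReal (2*(ε/C)) ≤ volume E := by
      calc ENNReal.ofReal (2*(ε/C)) = volume (Ioc (t₀ - ε/C) (t₀ + ε/C)) := by
            rw [Real.volume_Ioc]; congr 1; ring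
        _ ≤ volume E := measure_mono step2
    calc 2*(ε/C) = (ENNReal.ofReal (2*(ε/C))).toReal := by
          rw [ENNReal.toReal_ofReal (by positivity)]
      _ ≤ m := ENNReal.toReal_mono hfin.ne hlow
  -- integrability
  have hint : IntegrableOn f E := (hf.integrableOn_Icc).mono_set step1
  set I := ∫ t in E, f t with hIdef
  -- key1
  have key1 : |I - f t₀ * m| ≤ (ζ*V/8) * m := by
    have heq : ∫ t in E, (f t - f t₀) = I - f t₀ * m := by
      rw [integral_sub hint (integrableOn_const hfin.ne)]
      rw [setIntegral_const]
      simp [hmdef, hIdef, smul_eq_mul, mul_comm, Measure.real]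
    rw [← heq, ← Real.norm_eq_abs]
    refine norm_setIntegral_le_of_norm_le_const hfin ?_
    · intro t htE
      have h4 := step1 htE
      have habs : |t - t₀| ≤ ε/c := by
        rw [abs_le]; exact ⟨by linarith [h4.1], by linarith [h4.2]⟩
      have hεcρ : ε/c ≤ ρ := by rw [div_le_iff₀ hc0]; linarith [hε2]
      rw [Real.norm_eq_abs]
      exact hρ t (le_trans habs hεcρ)
  -- quotient bounds
  have hq1 : m/(2*ε) ≤ 1/c := by
    rw [div_le_div_iff₀ (by positivity) hc0]
    have h6 : m * c ≤ (2*(ε/c)) * c := mul_le_mul_of_nonneg_right hm1 hc0.le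
    have h7 : (ε/c) * c = ε := div_mul_cancel₀ _ hc0.ne'
    nlinarith
  have hq2 : 1/C ≤ m/(2*ε) := by
    have hC0 : (0:ℝ) < C := by linarith
    rw [div_le_div_iff₀ hC0 (by positivity)]
    have h6 : (2*(ε/C)) * C ≤ m * C := mul_le_mul_of_nonneg_right hm2 hC0.le
    have h7 : (ε/C) * C = ε := div_mul_cancel₀ _ hC0.ne'
    nlinarith
  have hVc : 1/V ≤ 1/c := one_div_le_one_div_of_le hc0 hcV.le
  have hVC' : 1/C ≤ 1/V := one_div_le_one_div_of_le hV hVC.le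
  -- final assembly
  rw [Real.dist_eq]
  have hsplit : I/(2*ε) - f t₀/V =
      (I - f t₀ * m)/(2*ε) + f t₀ * (m/(2*ε) - 1/V) := by
    field_simp
    ring
  rw [hsplit]
  have hb1 : |(I - f t₀ * m)/(2*ε)| ≤ ζ/4 := by
    rw [abs_div, abs_of_pos (by positivity : (0:ℝ) < 2*ε)]
    rw [div_le_iff₀ (by positivity : (0:ℝ) < 2*ε)]
    have h8 : ε/c ≤ 2*ε/V := by
      rw [div_le_div_iff₀ hc0 hV]; nlinarith
    calc |I - f t₀ * m| ≤ (ζ*V/8) * m := key1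
      _ ≤ (ζ*V/8) * (2*(ε/c)) := by
          apply mul_le_mul_of_nonneg_left hm1 (by positivity)
      _ ≤ (ζ*V/8) * (2*(2*ε/V)) := by
          apply mul_le_mul_of_nonneg_left (by linarith) (by positivity)
      _ = ζ/4 * (2*ε) := by field_simp; ring
  have hb2 : |f t₀ * (m/(2*ε) - 1/V)| ≤ ζ/4 := by
    rw [abs_mul]
    have habs : |m/(2*ε) - 1/V| ≤ 1/c - 1/C := by
      rw [abs_le]; constructor <;> linarith
    have hcsub : 1/c - 1/C ≤ 4*θ/V^2 := by
      rw [div_sub_div _ _ (ne_of_gt hc0) (by linarith : C ≠ 0)]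
      rw [div_le_div_iff₀ (by positivity) (by positivity)]
      simp only [hcdef, hCdef]
      have h9 : θ*θ ≤ (V/4)*(V/4) := mul_le_mul hθ1 hθ1 hθpos.le (by positivity)
      nlinarith [mul_le_mul_of_nonneg_left h9 hθpos.le,
        mul_nonneg hθpos.le (mul_pos hV hV).le]
    calc |f t₀| * |m/(2*ε) - 1/V| ≤ M * (4*θ/V^2) := by
          apply mul_le_mul le_rfl (le_trans habs hcsub) (abs_nonneg _) hM
      _ ≤ ζ/4 := by
          rw [le_div_iff₀ (by positivity : (0:ℝ) < 16*(M+1))] at hθ2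
          have heq : M * (4*θ/V^2) = (M*4*θ)/V^2 := by ring
          rw [heq, div_le_iff₀ (by positivity : (0:ℝ) < V^2)]
          nlinarith [hθpos.le, hM, hθ2]
  calc |(I - f t₀ * m)/(2*ε) + f t₀ * (m/(2*ε) - 1/V)| ≤
        |(I - f t₀ * m)/(2*ε)| + |f t₀ * (m/(2*ε) - 1/V)| := abs_add_le _ _
    _ ≤ ζ/4 + ζ/4 := add_le_add hb1 hb2
    _ < ζ := by linarith

lemma per_deriv {x : ℝ → ℝ} {T : ℝ} (hxper : Function.Periodic x T) (t : ℝ) :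
    deriv x (t + T) = deriv x t := by
  have hfe : (fun s => x (s + T)) = x := funext hxper
  calc deriv x (t + T) = deriv (fun s => x (s + T)) t := (deriv_comp_add_const x T t).symm
    _ = deriv x t := by rw [hfe]

/-- For a periodic orbit with exactly two transversal crossings of the level
`x = σ` per period, the time-average of `y` observed while `|x − σ| ≤ ε`
converges, as `ε → 0⁺`, to the speed-weighted average of the two values of
`y` at the crossings. -/
theorem time_average_at_level_crossings
    (T : ℝ) (hT : 0 < T)
    (x : ℝ → ℝ) (hx : ContDiff ℝ 1 x) (hxper : Function.Periodic x T)
    (y : ℝ → ℝ) (hy : Continuous y) (hyper : Function.Periodic y T)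
    (σ : ℝ) (t₁ t₂ : ℝ) (hne : t₁ ≠ t₂)
    (hcross : {t ∈ Set.Ico (0:ℝ) T | x t = σ} = {t₁, t₂})
    (hv₁ : deriv x t₁ ≠ 0) (hv₂ : deriv x t₂ ≠ 0) :
    Filter.Tendsto
      (fun ε : ℝ =>
        (∫ t in (0:ℝ)..T, if |x t - σ| ≤ ε then y t else 0) /
        (∫ t in (0:ℝ)..T, if |x t - σ| ≤ ε then (1:ℝ) else 0))
      (nhdsWithin 0 (Set.Ioi 0))
      (nhds ((y t₁ / |deriv x t₁| + y t₂ / |deriv x t₂|) /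
             (1 / |deriv x t₁| + 1 / |deriv x t₂|))) := by
  -- basic facts about t₁, t₂
  have hm₁ : t₁ ∈ {t | t ∈ Set.Ico (0:ℝ) T ∧ x t = σ} := by
    rw [show {t | t ∈ Set.Ico (0:ℝ) T ∧ x t = σ} = {t ∈ Set.Ico (0:ℝ) T | x t = σ} from rfl,
      hcross]; exact mem_insert _ _
  have hm₂ : t₂ ∈ {t | t ∈ Set.Ico (0:ℝ) T ∧ x t = σ} := by
    rw [show {t | t ∈ Set.Ico (0:ℝ) T ∧ x t = σ} = {t ∈ Set.Ico (0:ℝ) T | x t = σ} from rfl,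
      hcross]; exact mem_insert_of_mem _ rfl
  obtain ⟨⟨ht₁0, ht₁T⟩, hx₁⟩ := hm₁
  obtain ⟨⟨ht₂0, ht₂T⟩, hx₂⟩ := hm₂
  -- pick a base point a with x a ≠ σ
  have hinf : (Ioo (0:ℝ) T \ {t₁, t₂}).Infinite :=
    (Set.Ioo_infinite hT).diff (Set.toFinite _)
  obtain ⟨a, haIoo, haout⟩ := hinf.nonempty
  have ha0 : 0 < a := haIoo.1
  have haT : a < T := haIoo.2
  have hax : x a ≠ σ := by
    intro h
    apply haout
    have : a ∈ {t ∈ Set.Ico (0:ℝ) T | x t = σ} := ⟨⟨ha0.le, haT⟩, h⟩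
    rw [hcross] at this
    exact this
  -- shifted crossing points
  set u₁ := if a < t₁ then t₁ else t₁ + T with hu₁def
  set u₂ := if a < t₂ then t₂ else t₂ + T with hu₂def
  have ht₁a : t₁ ≠ a := fun h => hax (h ▸ hx₁)
  have ht₂a : t₂ ≠ a := fun h => hax (h ▸ hx₂)
  have hu₁p : a < u₁ ∧ u₁ < a + T ∧ x u₁ = σ ∧ deriv x u₁ = deriv x t₁ ∧ y u₁ = y t₁ := by
    rw [hu₁def]; split_ifs with h
    · exact ⟨h, by linarith, hx₁, rfl, rfl⟩
    · have h' : t₁ < a := lt_of_le_of_ne (not_lt.1 h) ht₁a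
      exact ⟨by linarith, by linarith, by rw [hxper t₁]; exact hx₁, per_deriv hxper t₁,
        hyper t₁⟩
  have hu₂p : a < u₂ ∧ u₂ < a + T ∧ x u₂ = σ ∧ deriv x u₂ = deriv x t₂ ∧ y u₂ = y t₂ := by
    rw [hu₂def]; split_ifs with h
    · exact ⟨h, by linarith, hx₂, rfl, rfl⟩
    · have h' : t₂ < a := lt_of_le_of_ne (not_lt.1 h) ht₂a
      exact ⟨by linarith, by linarith, by rw [hxper t₂]; exact hx₂, per_deriv hxper t₂,
        hyper t₂⟩
  obtain ⟨hau₁, hu₁aT, hxu₁, hdu₁, hyu₁⟩ := hu₁p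
  obtain ⟨hau₂, hu₂aT, hxu₂, hdu₂, hyu₂⟩ := hu₂p
  have hu12 : u₁ ≠ u₂ := by
    rw [hu₁def, hu₂def]; split_ifs with h1 h2 h2
    · exact hne
    · intro h; have h' : t₂ < a := lt_of_le_of_ne (not_lt.1 h2) ht₂a; linarith
    · intro h; have h' : t₁ < a := lt_of_le_of_ne (not_lt.1 h1) ht₁a; linarith
    · intro h; exact hne (by linarith)
  -- zeros in [a, a+T]
  have hzeros : ∀ t ∈ Icc a (a+T), x t = σ → t = u₁ ∨ t = u₂ := by
    intro t ⟨hta, htaT⟩ htx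
    have hta' : a < t := lt_of_le_of_ne hta (fun h => hax (h ▸ htx))
    by_cases htT : t < T
    · have hmem : t ∈ {s ∈ Set.Ico (0:ℝ) T | x s = σ} := ⟨⟨by linarith, htT⟩, htx⟩
      rw [hcross] at hmem
      simp only [mem_insert_iff, mem_singleton_iff] at hmem
      rcases hmem with h | h
      · left; rw [hu₁def, if_pos (h ▸ hta' : a < t₁)]; exact h
      · right; rw [hu₂def, if_pos (h ▸ hta' : a < t₂)]; exact h
    · push_neg at htT
      have h1 : t - T ∈ Set.Ico (0:ℝ) T := ⟨by linarith, by linarith⟩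
      have h2 : x (t - T) = σ := by
        have := hxper (t - T); rw [sub_add_cancel] at this; rw [← this]; exact htx
      have h3 : t - T ∈ {s ∈ Set.Ico (0:ℝ) T | x s = σ} := ⟨h1, h2⟩
      rw [hcross] at h3
      simp only [mem_insert_iff, mem_singleton_iff] at h3
      have h4 : t - T ≠ a := fun h => hax (h ▸ h2)
      have h5 : t - T < a := lt_of_le_of_ne (by linarith) h4
      rcases h3 with h | h
      · left
        have hna : ¬ a < t₁ := by rw [← h]; exact not_lt.2 h5.le
        rw [hu₁def, if_neg hna]; linarith
      · right
        have hna : ¬ a < t₂ := by rw [← h]; exact not_lt.2 h5.le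
        rw [hu₂def, if_neg hna]; linarith
  -- transversality data at u₁, u₂
  have hvu₁ : deriv x u₁ ≠ 0 := by rw [hdu₁]; exact hv₁
  have hvu₂ : deriv x u₂ ≠ 0 := by rw [hdu₂]; exact hv₂
  have hVu₁ : 0 < |deriv x u₁| := abs_pos.2 hvu₁
  have hVu₂ : 0 < |deriv x u₂| := abs_pos.2 hvu₂
  obtain ⟨δα, hδαpos, hsα⟩ := sandwich hx hxu₁
    (show |deriv x u₁|/2 < |deriv x u₁| by linarith)
    (show |deriv x u₁| < |deriv x u₁|+1 by linarith)
  obtain ⟨δβ, hδβpos, hsβ⟩ := sandwich hx hxu₂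
    (show |deriv x u₂|/2 < |deriv x u₂| by linarith)
    (show |deriv x u₂| < |deriv x u₂|+1 by linarith)
  have habsu : 0 < |u₁ - u₂| := abs_pos.2 (sub_ne_zero.2 hu12)
  set M0 := min (min δα δβ)
      (min (min (min (u₁ - a) (a + T - u₁)) (min (u₂ - a) (a + T - u₂))) (|u₁ - u₂|/2))
    with hM0def
  have hM0pos : 0 < M0 := by
    refine lt_min (lt_min hδαpos hδβpos)
      (lt_min (lt_min (lt_min ?_ ?_) (lt_min ?_ ?_)) ?_) <;> linarith [habsu]
  set δ := M0/2 with hδdef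
  have hδpos : 0 < δ := by rw [hδdef]; linarith
  have hδM0 : δ ≤ M0 := by rw [hδdef]; linarith
  have e1 : δ ≤ δα := hδM0.trans ((min_le_left _ _).trans (min_le_left _ _))
  have e2 : δ ≤ δβ := hδM0.trans ((min_le_left _ _).trans (min_le_right _ _))
  have e3 : δ ≤ u₁ - a := hδM0.trans ((min_le_right _ _).trans
    ((min_le_left _ _).trans ((min_le_left _ _).trans (min_le_left _ _))))
  have e4 : δ ≤ a + T - u₁ := hδM0.trans ((min_le_right _ _).trans
    ((min_le_left _ _).trans ((min_le_left _ _).trans (min_le_right _ _))))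
  have e5 : δ ≤ u₂ - a := hδM0.trans ((min_le_right _ _).trans
    ((min_le_left _ _).trans ((min_le_right _ _).trans (min_le_left _ _))))
  have e6 : δ ≤ a + T - u₂ := hδM0.trans ((min_le_right _ _).trans
    ((min_le_left _ _).trans ((min_le_right _ _).trans (min_le_right _ _))))
  have e7 : δ ≤ |u₁ - u₂|/2 := hδM0.trans ((min_le_right _ _).trans (min_le_right _ _))
  -- the two windows are disjoint
  have hdisj : Disjoint (Ioc (u₁-δ) (u₁+δ)) (Ioc (u₂-δ) (u₂+δ)) := by
    rw [Set.disjoint_left]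
    rintro t ⟨h1, h2⟩ ⟨h3, h4⟩
    have habs : |u₁ - u₂| < 2*δ := by
      rw [abs_sub_lt_iff]; constructor <;> linarith
    linarith [habsu]
  -- minimum of |x - σ| away from the windows
  have hmb : ∃ m > 0, ∀ t ∈ Icc a (a+T),
      t ∉ Ioo (u₁-δ) (u₁+δ) ∪ Ioo (u₂-δ) (u₂+δ) → m ≤ |x t - σ| := by
    set U := Ioo (u₁-δ) (u₁+δ) ∪ Ioo (u₂-δ) (u₂+δ) with hUdef
    set K := Icc a (a+T) \ U with hKdef
    have hKcomp : IsCompact K := isCompact_Icc.diff (isOpen_Ioo.union isOpen_Ioo)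
    by_cases hK : K.Nonempty
    · obtain ⟨t0, ht0K, hmin⟩ := hKcomp.exists_isMinOn hK
        ((hx.continuous.sub continuous_const).abs.continuousOn)
      refine ⟨|x t0 - σ|, ?_, fun t ht htU => isMinOn_iff.1 hmin t ⟨ht, htU⟩⟩
      rcases (abs_nonneg (x t0 - σ)).lt_or_eq with h | h
      · exact h
      · exfalso
        have hxt0 : x t0 = σ := by
          have h0 : |x t0 - σ| = 0 := h.symm
          rwa [abs_eq_zero, sub_eq_zero] at h0
        rcases hzeros t0 ht0K.1 hxt0 with h | h
        · exact ht0K.2 (Or.inl (by rw [h]; exact ⟨by linarith, by linarith⟩))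
        · exact ht0K.2 (Or.inr (by rw [h]; exact ⟨by linarith, by linarith⟩))
    · exact ⟨1, one_pos, fun t ht htU => absurd ⟨ht, htU⟩ (fun hmem => hK ⟨t, hmem⟩)⟩
  obtain ⟨m, hmpos, hmK⟩ := hmb
  -- local lower bounds for the crossing lemma
  have hlocu₁ : ∀ t, |t - u₁| ≤ δ → (|deriv x u₁|/2) * |t - u₁| ≤ |x t - σ| :=
    fun t ht => (hsα t (ht.trans e1)).1
  have hlocu₂ : ∀ t, |t - u₂| ≤ δ → (|deriv x u₂|/2) * |t - u₂| ≤ |x t - σ| :=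
    fun t ht => (hsβ t (ht.trans e2)).1
  have hy₁ := crossing_tendsto hx hy hδpos hxu₁ hvu₁ hlocu₁
  have hy₂ := crossing_tendsto hx hy hδpos hxu₂ hvu₂ hlocu₂
  have h1₁ := crossing_tendsto hx (continuous_const : Continuous fun _ : ℝ => (1:ℝ))
    hδpos hxu₁ hvu₁ hlocu₁
  have h1₂ := crossing_tendsto hx (continuous_const : Continuous fun _ : ℝ => (1:ℝ))
    hδpos hxu₂ hvu₂ hlocu₂
  -- limits of the localized sums
  have hNum : Filter.Tendsto
      (fun ε : ℝ => ((∫ t in {s : ℝ | |x s - σ| ≤ ε} ∩ Ioc (u₁-δ) (u₁+δ), y t) +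
        (∫ t in {s : ℝ | |x s - σ| ≤ ε} ∩ Ioc (u₂-δ) (u₂+δ), y t)) / (2*ε))
      (nhdsWithin 0 (Set.Ioi 0))
      (nhds (y t₁ / |deriv x t₁| + y t₂ / |deriv x t₂|)) := by
    have h := hy₁.add hy₂
    rw [hyu₁, hyu₂, hdu₁, hdu₂] at h
    exact h.congr (fun ε => (add_div _ _ _).symm)
  have hDen : Filter.Tendsto
      (fun ε : ℝ => ((∫ t in {s : ℝ | |x s - σ| ≤ ε} ∩ Ioc (u₁-δ) (u₁+δ), (1:ℝ)) +
        (∫ t in {s : ℝ | |x s - σ| ≤ ε} ∩ Ioc (u₂-δ) (u₂+δ), (1:ℝ))) / (2*ε))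
      (nhdsWithin 0 (Set.Ioi 0))
      (nhds (1 / |deriv x t₁| + 1 / |deriv x t₂|)) := by
    have h := h1₁.add h1₂
    rw [hdu₁, hdu₂] at h
    exact h.congr (fun ε => (add_div _ _ _).symm)
  have hBpos : 0 < 1 / |deriv x t₁| + 1 / |deriv x t₂| :=
    add_pos (one_div_pos.2 (abs_pos.2 hv₁)) (one_div_pos.2 (abs_pos.2 hv₂))
  have hquot := hNum.div hDen hBpos.ne'
  -- the splitting identity for small ε
  have hsplit : ∀ f : ℝ → ℝ, Continuous f → Function.Periodic f T → ∀ ε : ℝ, 0 < ε → ε < m →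
      (∫ t in (0:ℝ)..T, if |x t - σ| ≤ ε then f t else 0) =
      (∫ t in {s : ℝ | |x s - σ| ≤ ε} ∩ Ioc (u₁-δ) (u₁+δ), f t) +
      (∫ t in {s : ℝ | |x s - σ| ≤ ε} ∩ Ioc (u₂-δ) (u₂+δ), f t) := by
    intro f hf hfper ε hε hεm
    have hS : MeasurableSet {s : ℝ | |x s - σ| ≤ ε} :=
      (isClosed_le ((hx.continuous.sub continuous_const).abs) continuous_const).measurableSet
    have hgper : Function.Periodic (fun t => if |x t - σ| ≤ ε then f t else 0) T := by
      intro s; simp only [hxper s, hfper s]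
    have h1 : (∫ t in (0:ℝ)..T, if |x t - σ| ≤ ε then f t else 0)
        = ∫ t in a..(a+T), if |x t - σ| ≤ ε then f t else 0 := by
      have h := hgper.intervalIntegral_add_eq a 0
      rw [zero_add] at h
      exact h.symm
    rw [h1, intervalIntegral.integral_of_le (by linarith : a ≤ a+T)]
    have hind : (fun t => if |x t - σ| ≤ ε then f t else 0)
        = Set.indicator {s : ℝ | |x s - σ| ≤ ε} f := by
      funext t; rw [Set.indicator_apply]; rfl
    rw [hind, setIntegral_indicator hS]
    have hseteq : Ioc a (a+T) ∩ {s : ℝ | |x s - σ| ≤ ε} =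
        ({s : ℝ | |x s - σ| ≤ ε} ∩ Ioc (u₁-δ) (u₁+δ)) ∪
        ({s : ℝ | |x s - σ| ≤ ε} ∩ Ioc (u₂-δ) (u₂+δ)) := by
      apply Set.Subset.antisymm
      · rintro t ⟨htI, htS⟩
        by_cases h1 : t ∈ Ioo (u₁-δ) (u₁+δ)
        · exact Or.inl ⟨htS, ⟨h1.1, h1.2.le⟩⟩
        by_cases h2 : t ∈ Ioo (u₂-δ) (u₂+δ)
        · exact Or.inr ⟨htS, ⟨h2.1, h2.2.le⟩⟩
        exfalso
        have hb : m ≤ |x t - σ| :=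
          hmK t (Ioc_subset_Icc_self htI) (by rintro (h | h); exacts [h1 h, h2 h])
        have hb2 : |x t - σ| ≤ ε := htS
        linarith
      · rintro t (⟨htS, htI⟩ | ⟨htS, htI⟩)
        · exact ⟨⟨by linarith [htI.1], by linarith [htI.2]⟩, htS⟩
        · exact ⟨⟨by linarith [htI.1], by linarith [htI.2]⟩, htS⟩
    rw [hseteq]
    exact setIntegral_union (hdisj.mono inter_subset_right inter_subset_right)
      (hS.inter measurableSet_Ioc)
      ((hf.integrableOn_Icc).mono_set (inter_subset_right.trans Ioc_subset_Icc_self))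
      ((hf.integrableOn_Icc).mono_set (inter_subset_right.trans Ioc_subset_Icc_self))
  -- finish by eventual equality
  refine Filter.Tendsto.congr' ?_ hquot
  filter_upwards [Ioo_mem_nhdsGT_of_mem (⟨le_rfl, hmpos⟩ : (0:ℝ) ∈ Ico 0 m)] with ε hε
  obtain ⟨hε0, hεm⟩ := hε
  simp only [Pi.div_apply]
  rw [div_div_div_cancel_right₀ (by positivity : (2*ε) ≠ 0),
    hsplit y hy hyper ε hε0 hεm,
    hsplit (fun _ => (1:ℝ)) continuous_const (fun _ => rfl) ε hε0 hεm]
end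

section
/- Let n ≥ 1, let u : ℝ → ℝⁿ be continuous, and let x : ℝ → ℝⁿ be differentiable with x_a(t) > 0 and Σ_b x_b(t) = 1 for all t, satisfying the replicator dynamics x_a′(t) = x_a(t)·(u_a(t) − Σ_b x_b(t)·u_b(t)) for every action a and all t. Then for every action a and every T ≥ 0, the cumulative regret against the fixed action a satisfies ∫₀ᵀ (u_a(t) − Σ_b x_b(t)·u_b(t)) dt = ln(x_a(T)) − ln(x_a(0)) ≤ −ln(x_a(0)). In particular, the external regret of replicator dynamics is bounded by a constant independent of T. -/
/-- Replicator dynamics has bounded external regret against every fixed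
action: the cumulative regret equals `ln x_a(T) − ln x_a(0)`, which is at
most the constant `−ln x_a(0)`, independently of `T`. -/
theorem replicator_external_regret_bounded
    (n : ℕ) (hn : 1 ≤ n)
    (u : ℝ → Fin n → ℝ) (hu : Continuous fun p : ℝ × Fin n => u p.1 p.2)
    (x : ℝ → Fin n → ℝ)
    (hpos : ∀ t a, 0 < x t a)
    (hsum : ∀ t, ∑ b, x t b = 1)
    (hderiv : ∀ a t, HasDerivAt (fun s => x s a)
      (x t a * (u t a - ∑ b, x t b * u t b)) t) :
    ∀ (a : Fin n) (T : ℝ), 0 ≤ T →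
      (∫ t in (0:ℝ)..T, (u t a - ∑ b, x t b * u t b))
        = Real.log (x T a) - Real.log (x 0 a) ∧
      (∫ t in (0:ℝ)..T, (u t a - ∑ b, x t b * u t b))
        ≤ - Real.log (x 0 a) := by
  intro a T hT
  have hxc : ∀ b : Fin n, Continuous fun t => x t b := fun b =>
    Differentiable.continuous fun t => (hderiv b t).differentiableAt
  have huc : ∀ b : Fin n, Continuous fun t => u t b := fun b =>
    hu.comp (continuous_id.prodMk continuous_const)
  have hfc : Continuous fun t => u t a - ∑ b, x t b * u t b := by
    exact (huc a).sub (continuous_finset_sum _ fun b _ => (hxc b).mul (huc b))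
  have hlog : ∀ t, HasDerivAt (fun s => Real.log (x s a))
      (u t a - ∑ b, x t b * u t b) t := by
    intro t
    have h := (hderiv a t).log (hpos t a).ne'
    rwa [mul_comm, mul_div_assoc, div_self (hpos t a).ne', mul_one] at h
  have heq : (∫ t in (0:ℝ)..T, (u t a - ∑ b, x t b * u t b))
      = Real.log (x T a) - Real.log (x 0 a) := by
    exact intervalIntegral.integral_eq_sub_of_hasDerivAt
      (fun t _ => hlog t) (hfc.intervalIntegrable 0 T)
  refine ⟨heq, ?_⟩
  rw [heq]
  have hle1 : x T a ≤ 1 := by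
    rw [← hsum T]
    exact Finset.single_le_sum (fun b _ => (hpos T b).le) (Finset.mem_univ a)
  have : Real.log (x T a) ≤ 0 := Real.log_nonpos (hpos T a).le hle1
  linarith
end

section
/- Let u₁, u₂ : ℝ → ℝ be continuous and let p : ℝ → (0,1) be differentiable with p′(t) = p(t)(1−p(t))·(u₁(t) − u₂(t)) for all t (replicator dynamics over two actions, where p is the probability of the first action). Fix p₀ and ε with 0 < p₀ − ε < p₀ + ε < 1, and let 0 ≤ a₁ < b₁ ≤ a₂ < b₂ ≤ … ≤ a_N < b_N be times such that for odd j, p(a_j) = p₀ − ε and p(b_j) = p₀ + ε, while for even j, p(a_j) = p₀ + ε and p(b_j) = p₀ − ε (the trajectory alternately traverses the interval (p₀−ε, p₀+ε) from one end to the other). Then the aggregated regret against the first action accumulated over these intervals satisfies Σ_{j=1}^{N} ∫_{a_j}^{b_j} ( u₁(t) − (p(t)·u₁(t) + (1−p(t))·u₂(t)) ) dt ≤ ln(p₀ + ε) − ln(p₀ − ε). In particular it remains bounded for all N. -/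
lemma alt_sum_le (L : ℝ) (hL : 0 ≤ L) (N : ℕ) :
    (∑ j ∈ Finset.range N, if j % 2 = 0 then L else -L) ≤ L := by
  have key : ∀ n : ℕ, (∑ j ∈ Finset.range n, if j % 2 = 0 then L else -L)
      = if n % 2 = 0 then 0 else L := by
    intro n
    induction n with
    | zero => simp
    | succ n ih =>
      rw [Finset.sum_range_succ, ih]
      rcases Nat.even_or_odd n with h | h
      · have h1 : n % 2 = 0 := Nat.even_iff.mp h
        have h2 : (n + 1) % 2 = 1 := by omega
        simp [h1, h2]
      · have h1 : n % 2 = 1 := Nat.odd_iff.mp h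
        have h2 : (n + 1) % 2 = 0 := by omega
        simp [h1, h2]
  rw [key]
  split <;> simp [hL]

/-- The regret of replicator dynamics (two actions) against the first action,
aggregated over the time intervals during which the trajectory traverses the
band `(p₀ − ε, p₀ + ε)` alternately from end to end, is bounded by
`ln(p₀+ε) − ln(p₀−ε)`, uniformly in the number of traversals. -/
theorem replicator_band_regret_bounded
    (u₁ u₂ : ℝ → ℝ) (hu₁ : Continuous u₁) (hu₂ : Continuous u₂)
    (p : ℝ → ℝ) (hp : ∀ t, p t ∈ Set.Ioo (0:ℝ) 1)
    (hp' : ∀ t, HasDerivAt p (p t * (1 - p t) * (u₁ t - u₂ t)) t)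
    (p₀ ε : ℝ) (h₁ : 0 < p₀ - ε) (h₂ : p₀ - ε < p₀ + ε) (h₃ : p₀ + ε < 1)
    (N : ℕ) (a b : ℕ → ℝ)
    (hab : ∀ j < N, a j < b j)
    (hba : ∀ j, j + 1 < N → b j ≤ a (j + 1))
    (h0 : 0 < N → 0 ≤ a 0)
    (hodd : ∀ j < N, j % 2 = 0 → p (a j) = p₀ - ε ∧ p (b j) = p₀ + ε)
    (heven : ∀ j < N, j % 2 = 1 → p (a j) = p₀ + ε ∧ p (b j) = p₀ - ε) :
    ∑ j ∈ Finset.range N,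
        ∫ t in (a j)..(b j), (u₁ t - (p t * u₁ t + (1 - p t) * u₂ t))
      ≤ Real.log (p₀ + ε) - Real.log (p₀ - ε) := by
  set L := Real.log (p₀ + ε) - Real.log (p₀ - ε) with hLdef
  have hL0 : 0 ≤ L := sub_nonneg.2 (Real.log_le_log h₁ h₂.le)
  have hpc : Continuous p := by
    rw [continuous_iff_continuousAt]
    exact fun t => (hp' t).continuousAt
  have key : ∀ j, (∫ t in (a j)..(b j), (u₁ t - (p t * u₁ t + (1 - p t) * u₂ t)))
      = Real.log (p (b j)) - Real.log (p (a j)) := by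
    intro j
    have hderiv : ∀ t ∈ Set.uIcc (a j) (b j),
        HasDerivAt (fun s => Real.log (p s))
          (u₁ t - (p t * u₁ t + (1 - p t) * u₂ t)) t := by
      intro t _
      have hne : p t ≠ 0 := (hp t).1.ne'
      have := (hp' t).log hne
      convert this using 1
      field_simp
      ring
    have hint : IntervalIntegrable (fun t => u₁ t - (p t * u₁ t + (1 - p t) * u₂ t))
        MeasureTheory.volume (a j) (b j) := by
      apply Continuous.intervalIntegrable
      continuity
    exact (intervalIntegral.integral_eq_sub_of_hasDerivAt hderiv hint)
  have hsum : ∑ j ∈ Finset.range N,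
        (∫ t in (a j)..(b j), (u₁ t - (p t * u₁ t + (1 - p t) * u₂ t)))
      = ∑ j ∈ Finset.range N, (if j % 2 = 0 then L else -L) := by
    apply Finset.sum_congr rfl
    intro j hj
    rw [Finset.mem_range] at hj
    rw [key j]
    rcases Nat.even_or_odd j with h | h
    · have h1 : j % 2 = 0 := Nat.even_iff.mp h
      obtain ⟨ha, hb⟩ := hodd j hj h1
      simp [h1, ha, hb, hLdef]
    · have h1 : j % 2 = 1 := Nat.odd_iff.mp h
      obtain ⟨ha, hb⟩ := heven j hj h1
      simp [h1, ha, hb, hLdef]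
  rw [hsum]
  exact alt_sum_le L hL0 N
end
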